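/- Three states with Γ ≤ 0: let γ₁₂, γ₂₃, γ₃₁ ≥ 0 and let N be the 3×3 real symmetric matrix with diagonal entries 1 and off-diagonal entries N₁₂ = −γ₁₂, N₂₃ = −γ₂₃, N₃₁ = −γ₃₁; assume N is positive definite, and let η_1, η_2, η_3 > 0 with η_1 + η_2 + η_3 = 1. Then the maximum of Σ_i η_i x_i over x ∈ ℝ³ with N − diag(x) positive semidefinite (no sign constraint on x) equals 1 − 2√(η_1η_2) γ₁₂ − 2√(η_2η_3) γ₂₃ − 2√(η_3η_1) γ₃₁, and it is attained at x₁ = 1 − (√η_2 γ₁₂ + √η_3 γ₃₁)/√η_1, x₂ = 1 − (√η_1 γ₁₂ + √η_3 γ₂₃)/√η_2, x₃ = 1 − (√η_1 γ₃₁ + √η_2 γ₂₃)/√η_3. -/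

import Mathlib

lemma aux_psd (γ₁₂ γ₂₃ γ₃₁ s₁ s₂ s₃ : ℝ)
    (hγ₁₂ : 0 ≤ γ₁₂) (hγ₂₃ : 0 ≤ γ₂₃) (hγ₃₁ : 0 ≤ γ₃₁)
    (hs₁ : 0 < s₁) (hs₂ : 0 < s₂) (hs₃ : 0 < s₃) :
    ((!![1, -γ₁₂, -γ₃₁; -γ₁₂, 1, -γ₂₃; -γ₃₁, -γ₂₃, 1] : Matrix (Fin 3) (Fin 3) ℝ) -
      Matrix.diagonal ![1 - (s₂ * γ₁₂ + s₃ * γ₃₁) / s₁,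
        1 - (s₁ * γ₁₂ + s₃ * γ₂₃) / s₂,
        1 - (s₁ * γ₃₁ + s₂ * γ₂₃) / s₃]).PosSemidef := by
  rw [Matrix.posSemidef_iff_dotProduct_mulVec]
  constructor
  · refine (Matrix.IsHermitian.sub ?_ (Matrix.isHermitian_diagonal _))
    ext i j
    fin_cases i <;> fin_cases j <;> simp [Matrix.conjTranspose_apply]
  · intro v
    simp only [Matrix.mulVec, dotProduct, Fin.sum_univ_three, Matrix.sub_apply,
      Matrix.diagonal_apply, Matrix.cons_val_zero, Matrix.cons_val_one, Matrix.head_cons,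
      Matrix.cons_val', Matrix.empty_val', Matrix.cons_val_fin_one, Matrix.of_apply,
      star_trivial, Matrix.cons_val_two, Matrix.tail_cons]
    norm_num [Fin.ext_iff]
    have key : ∀ A B C : ℝ, A = (s₂ * γ₁₂ + s₃ * γ₃₁) / s₁ → B = (s₁ * γ₁₂ + s₃ * γ₂₃) / s₂ → C = (s₁ * γ₃₁ + s₂ * γ₂₃) / s₃ →
        v 0 * (A * v 0 + -(γ₁₂ * v 1) + -(γ₃₁ * v 2)) +
        v 1 * (-(γ₁₂ * v 0) + B * v 1 + -(γ₂₃ * v 2)) +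
        v 2 * (-(γ₃₁ * v 0) + -(γ₂₃ * v 1) + C * v 2)
        = (γ₁₂ * s₃ * (s₂ * v 0 - s₁ * v 1)^2 + γ₂₃ * s₁ * (s₃ * v 1 - s₂ * v 2)^2 +
           γ₃₁ * s₂ * (s₁ * v 2 - s₃ * v 0)^2) / (s₁ * s₂ * s₃) := by
      rintro A B C rfl rfl rfl
      field_simp
      ring
    rw [key _ _ _ rfl rfl rfl]
    positivity

/-- Three pure states with `Γ ≤ 0` (all mutual inner products real nonpositive):
the maximum of the relaxed problem (no sign constraint on `x`) is
`1 - 2√(η₁η₂)γ₁₂ - 2√(η₂η₃)γ₂₃ - 2√(η₃η₁)γ₃₁`, attained at the indicated point. -/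
theorem three_state_gamma_nonpos
    (γ₁₂ γ₂₃ γ₃₁ η₁ η₂ η₃ : ℝ)
    (hγ₁₂ : 0 ≤ γ₁₂) (hγ₂₃ : 0 ≤ γ₂₃) (hγ₃₁ : 0 ≤ γ₃₁)
    (hN : (!![1, -γ₁₂, -γ₃₁; -γ₁₂, 1, -γ₂₃; -γ₃₁, -γ₂₃, 1] :
      Matrix (Fin 3) (Fin 3) ℝ).PosDef)
    (hη₁ : 0 < η₁) (hη₂ : 0 < η₂) (hη₃ : 0 < η₃) (hsum : η₁ + η₂ + η₃ = 1) :
    IsGreatest {p : ℝ | ∃ x : Fin 3 → ℝ,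
        (!![1, -γ₁₂, -γ₃₁; -γ₁₂, 1, -γ₂₃; -γ₃₁, -γ₂₃, 1] -
          Matrix.diagonal x).PosSemidef ∧
        p = η₁ * x 0 + η₂ * x 1 + η₃ * x 2}
      (1 - 2 * Real.sqrt (η₁ * η₂) * γ₁₂ - 2 * Real.sqrt (η₂ * η₃) * γ₂₃ -
        2 * Real.sqrt (η₃ * η₁) * γ₃₁) ∧
    ((!![1, -γ₁₂, -γ₃₁; -γ₁₂, 1, -γ₂₃; -γ₃₁, -γ₂₃, 1] -
        Matrix.diagonal
          ![1 - (Real.sqrt η₂ * γ₁₂ + Real.sqrt η₃ * γ₃₁) / Real.sqrt η₁,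
            1 - (Real.sqrt η₁ * γ₁₂ + Real.sqrt η₃ * γ₂₃) / Real.sqrt η₂,
            1 - (Real.sqrt η₁ * γ₃₁ + Real.sqrt η₂ * γ₂₃) / Real.sqrt η₃]).PosSemidef ∧
      η₁ * (1 - (Real.sqrt η₂ * γ₁₂ + Real.sqrt η₃ * γ₃₁) / Real.sqrt η₁) +
        η₂ * (1 - (Real.sqrt η₁ * γ₁₂ + Real.sqrt η₃ * γ₂₃) / Real.sqrt η₂) +
        η₃ * (1 - (Real.sqrt η₁ * γ₃₁ + Real.sqrt η₂ * γ₂₃) / Real.sqrt η₃) =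
      1 - 2 * Real.sqrt (η₁ * η₂) * γ₁₂ - 2 * Real.sqrt (η₂ * η₃) * γ₂₃ -
        2 * Real.sqrt (η₃ * η₁) * γ₃₁) := by
  set s₁ := Real.sqrt η₁ with hs₁def
  set s₂ := Real.sqrt η₂ with hs₂def
  set s₃ := Real.sqrt η₃ with hs₃def
  have hs₁ : 0 < s₁ := Real.sqrt_pos.2 hη₁
  have hs₂ : 0 < s₂ := Real.sqrt_pos.2 hη₂
  have hs₃ : 0 < s₃ := Real.sqrt_pos.2 hη₃
  have hq₁ : s₁ * s₁ = η₁ := Real.mul_self_sqrt hη₁.le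
  have hq₂ : s₂ * s₂ = η₂ := Real.mul_self_sqrt hη₂.le
  have hq₃ : s₃ * s₃ = η₃ := Real.mul_self_sqrt hη₃.le
  have hm₁₂ : Real.sqrt (η₁ * η₂) = s₁ * s₂ := Real.sqrt_mul hη₁.le η₂
  have hm₂₃ : Real.sqrt (η₂ * η₃) = s₂ * s₃ := Real.sqrt_mul hη₂.le η₃
  have hm₃₁ : Real.sqrt (η₃ * η₁) = s₃ * s₁ := Real.sqrt_mul hη₃.le η₁
  have hpsd := aux_psd γ₁₂ γ₂₃ γ₃₁ s₁ s₂ s₃ hγ₁₂ hγ₂₃ hγ₃₁ hs₁ hs₂ hs₃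
  have hval : η₁ * (1 - (s₂ * γ₁₂ + s₃ * γ₃₁) / s₁) +
        η₂ * (1 - (s₁ * γ₁₂ + s₃ * γ₂₃) / s₂) +
        η₃ * (1 - (s₁ * γ₃₁ + s₂ * γ₂₃) / s₃) =
      1 - 2 * Real.sqrt (η₁ * η₂) * γ₁₂ - 2 * Real.sqrt (η₂ * η₃) * γ₂₃ -
        2 * Real.sqrt (η₃ * η₁) * γ₃₁ := by
    have hsum' : s₁ * s₁ + s₂ * s₂ + s₃ * s₃ = 1 := by rw [hq₁, hq₂, hq₃]; exact hsum
    rw [hm₁₂, hm₂₃, hm₃₁, ← hq₁, ← hq₂, ← hq₃]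
    field_simp
    linear_combination hsum'
  refine ⟨⟨⟨![1 - (s₂ * γ₁₂ + s₃ * γ₃₁) / s₁, 1 - (s₁ * γ₁₂ + s₃ * γ₂₃) / s₂,
      1 - (s₁ * γ₃₁ + s₂ * γ₂₃) / s₃], hpsd, ?_⟩, ?_⟩, hpsd, hval⟩
  · simp only [Matrix.cons_val_zero, Matrix.cons_val_one, Matrix.head_cons,
      Matrix.cons_val_two, Matrix.tail_cons]
    exact hval.symm
  · rintro p ⟨x, hx, rfl⟩
    have h := hx.dotProduct_mulVec_nonneg ![s₁, s₂, s₃]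
    simp only [Matrix.mulVec, dotProduct, Fin.sum_univ_three, Matrix.sub_apply,
      Matrix.diagonal_apply, Matrix.cons_val_zero, Matrix.cons_val_one, Matrix.head_cons,
      Matrix.cons_val', Matrix.empty_val', Matrix.cons_val_fin_one, Matrix.of_apply,
      star_trivial, Matrix.cons_val_two, Matrix.tail_cons] at h
    norm_num [Fin.ext_iff] at h
    have k₁ : s₁ * s₁ * x 0 = η₁ * x 0 := by rw [hq₁]
    have k₂ : s₂ * s₂ * x 1 = η₂ * x 1 := by rw [hq₂]
    have k₃ : s₃ * s₃ * x 2 = η₃ * x 2 := by rw [hq₃]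
    rw [hm₁₂, hm₂₃, hm₃₁]
    nlinarith [h, hq₁, hq₂, hq₃, hsum, k₁, k₂, k₃]
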